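/- Let (x_k)_{k∈ℕ} be a sequence of measurable maps Ω → ℝⁿ taking values in 𝒳 such that (i) for every x̃ ∈ X*, almost surely the real sequence (‖x_k − x̃‖)_k converges as k → ∞, and (ii) almost surely lim inf_{k→∞} F(x_k) = F*. Then almost surely there exists a point x̄ ∈ X* (depending on the sample point) such that x_k → x̄. -/
import Mathlib


open Filter MeasureTheory

theorem stmt_15 {Ω : Type*} [MeasurableSpace Ω] (P : Measure Ω) [IsProbabilityMeasure P]
    {n : ℕ} (hn : 1 ≤ n)
    (𝒳 : Set (EuclideanSpace ℝ (Fin n))) (h𝒳ne : 𝒳.Nonempty) (h𝒳cl : IsClosed 𝒳)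
    (h𝒳cv : Convex ℝ 𝒳)
    (F : EuclideanSpace ℝ (Fin n) → ℝ) (hF : Continuous F)
    (hFcv : ConvexOn ℝ Set.univ F)
    (Fstar : ℝ) (hFstar : IsLeast (F '' 𝒳) Fstar)
    (x : ℕ → Ω → EuclideanSpace ℝ (Fin n))
    (hxm : ∀ k, Measurable (x k)) (hx𝒳 : ∀ k ω, x k ω ∈ 𝒳)
    (hconv : ∀ xt ∈ {y ∈ 𝒳 | F y = Fstar}, ∀ᵐ ω ∂P, ∃ l : ℝ,
      Tendsto (fun k => ‖x k ω - xt‖) atTop (nhds l))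
    (hliminf : ∀ᵐ ω ∂P, liminf (fun k => F (x k ω)) atTop = Fstar) :
    ∀ᵐ ω ∂P, ∃ xbar ∈ {y ∈ 𝒳 | F y = Fstar},
      Tendsto (fun k => x k ω) atTop (nhds xbar) := by
  set Xs : Set (EuclideanSpace ℝ (Fin n)) := {y ∈ 𝒳 | F y = Fstar} with hXsdef
  obtain ⟨x0, hx0𝒳, hx0F⟩ := hFstar.1
  have hx0Xs : x0 ∈ Xs := ⟨hx0𝒳, hx0F⟩
  obtain ⟨D, hDsub, hDcount, hDdense⟩ :=
    (TopologicalSpace.IsSeparable.of_separableSpace Xs).exists_countable_dense_subset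
  have hae : ∀ᵐ ω ∂P, (∀ d ∈ D, ∃ l : ℝ, Tendsto (fun k => ‖x k ω - d‖) atTop (nhds l))
      ∧ liminf (fun k => F (x k ω)) atTop = Fstar :=
    ((ae_ball_iff hDcount).2 fun d hd => hconv d (hDsub hd)).and hliminf
  filter_upwards [hae] with ω hω
  obtain ⟨hD, hlim⟩ := hω
  have hFge : ∀ k, Fstar ≤ F (x k ω) := fun k => hFstar.2 ⟨x k ω, hx𝒳 k ω, rfl⟩
  -- D is nonempty
  have hDne : D.Nonempty := by
    rcases D.eq_empty_or_nonempty with h | h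
    · exfalso
      have := hDdense hx0Xs
      rw [h, closure_empty] at this
      exact this
    · exact h
  obtain ⟨d0, hd0⟩ := hDne
  obtain ⟨l0, hl0⟩ := hD d0 hd0
  -- boundedness
  obtain ⟨R, hR⟩ := hl0.bddAbove_range
  have hball : ∀ k, x k ω ∈ Metric.closedBall d0 R := fun k => by
    have : ‖x k ω - d0‖ ≤ R := hR ⟨k, rfl⟩
    simpa [Metric.mem_closedBall, dist_eq_norm] using this
  -- subsequence along which F tends to Fstar
  have hfreq : ∀ j : ℕ, ∃ᶠ k in atTop, F (x k ω) < Fstar + 1 / (j + 1) := by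
    intro j
    obtain ⟨M, hM⟩ := (isCompact_closedBall d0 R).bddAbove_image hF.continuousOn
    have hb : IsCoboundedUnder (· ≥ ·) atTop (fun k => F (x k ω)) :=
      isCoboundedUnder_ge_of_eventually_le atTop
        (Filter.Eventually.of_forall fun k => hM ⟨x k ω, hball k, rfl⟩)
    refine frequently_lt_of_liminf_lt hb ?_
    rw [hlim]
    have : (0 : ℝ) < 1 / (j + 1) := by positivity
    linarith
  obtain ⟨φ, hφ, hφF⟩ := Filter.extraction_forall_of_frequently hfreq
  have hFtend : Tendsto (fun j => F (x (φ j) ω)) atTop (nhds Fstar) := by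
    have h1 : Tendsto (fun j : ℕ => Fstar + 1 / (j + 1 : ℝ)) atTop (nhds (Fstar + 0)) :=
      tendsto_const_nhds.add tendsto_one_div_add_atTop_nhds_zero_nat
    rw [add_zero] at h1
    refine tendsto_of_tendsto_of_tendsto_of_le_of_le tendsto_const_nhds h1
      (fun j => hFge (φ j)) (fun j => (hφF j).le)
  -- extract convergent subsequence
  obtain ⟨xbar, hxbarball, ψ, hψ, hψtend⟩ :=
    (isCompact_closedBall d0 R).tendsto_subseq (x := fun j => x (φ j) ω) (fun j => hball (φ j))
  have hxbar𝒳 : xbar ∈ 𝒳 :=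
    h𝒳cl.mem_of_tendsto hψtend (Filter.Eventually.of_forall fun m => hx𝒳 _ ω)
  have hxbarF : F xbar = Fstar := by
    have h1 : Tendsto (fun m => F (x (φ (ψ m)) ω)) atTop (nhds (F xbar)) :=
      (hF.tendsto xbar).comp hψtend
    have h2 : Tendsto (fun m => F (x (φ (ψ m)) ω)) atTop (nhds Fstar) :=
      hFtend.comp hψ.tendsto_atTop
    exact tendsto_nhds_unique h1 h2
  have hxbarXs : xbar ∈ Xs := ⟨hxbar𝒳, hxbarF⟩
  refine ⟨xbar, hxbarXs, ?_⟩
  rw [Metric.tendsto_atTop]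
  intro ε hε
  have hεq : (0 : ℝ) < ε / 4 := by linarith
  obtain ⟨d, hdD, hdclose⟩ := Metric.mem_closure_iff.1 (hDdense hxbarXs) (ε / 4) hεq
  obtain ⟨ld, hld⟩ := hD d hdD
  -- ld = ‖xbar - d‖ < ε/4
  have hldval : ld = ‖xbar - d‖ := by
    have h1 : Tendsto (fun m => ‖x (φ (ψ m)) ω - d‖) atTop (nhds ld) :=
      hld.comp (hφ.comp hψ).tendsto_atTop
    have h2 : Tendsto (fun m => ‖x (φ (ψ m)) ω - d‖) atTop (nhds ‖xbar - d‖) := by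
      have : Continuous fun y : EuclideanSpace ℝ (Fin n) => ‖y - d‖ :=
        (continuous_id.sub continuous_const).norm
      exact (this.tendsto xbar).comp hψtend
    exact tendsto_nhds_unique h1 h2
  have hldlt : ld < ε / 2 := by
    rw [hldval, ← dist_eq_norm]
    linarith
  have hev : ∀ᶠ k in atTop, ‖x k ω - d‖ < ε / 2 := hld.eventually_lt_const hldlt
  obtain ⟨N, hN⟩ := eventually_atTop.1 hev
  refine ⟨N, fun k hk => ?_⟩
  have h1 : dist (x k ω) d < ε / 2 := by rw [dist_eq_norm]; exact hN k hk
  calc dist (x k ω) xbar ≤ dist (x k ω) d + dist d xbar := dist_triangle _ _ _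
    _ < ε / 2 + ε / 4 := by rw [dist_comm d xbar]; exact add_lt_add h1 hdclose
    _ < ε := by linarith
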